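/- Let {A_k}_{k=0}^∞ be complex-valued random variables on a common probability space, and let F_k denote the distribution function of |A_k|. Suppose Assumptions 1 and 2 hold: there exist a > 1 and a decreasing function f : [a,∞) → [0,1] with ∫_a^∞ f(x)/x dx < ∞ and 1 − F_k(x) ≤ f(x) for all x ∈ [a,∞) and all k ≥ 0; and there exist 0 < b < 1 and an increasing function g : [0,b] → [0,1] with ∫_0^b g(x)/x dx < ∞ and F_k(x) ≤ g(x) for all x ∈ [0,b] and all k ≥ 0. Then lim_{n→∞} max_{0≤k≤n} |A_k|^{1/n} = 1 almost surely. -/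

import Mathlib

open MeasureTheory Filter

lemma summable_anti_aux {a c : ℝ} (ha : 0 < a) (hc : 1 < c) {f : ℝ → ℝ}
    (hanti : AntitoneOn f (Set.Ici a)) (h0 : ∀ x ∈ Set.Ici a, 0 ≤ f x)
    (hint : IntegrableOn (fun x => f x / x) (Set.Ici a))
    {m0 : ℕ} (hm0 : a ≤ c ^ m0) :
    Summable (fun k : ℕ => f (c ^ (k + m0 + 1))) := by
  have hc0 : (0:ℝ) < c := lt_trans one_pos hc
  have hlc : 0 < Real.log c := Real.log_pos hc
  have hpow : ∀ j : ℕ, m0 ≤ j → a ≤ c ^ j := fun j hj =>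
    hm0.trans (pow_le_pow_right₀ hc.le hj)
  have hII : ∀ p q : ℝ, a ≤ p → p ≤ q → IntervalIntegrable (fun x => f x / x) volume p q := by
    intro p q hap hpq
    rw [intervalIntegrable_iff, Set.uIoc_of_le hpq]
    exact hint.mono_set (fun x hx => le_trans hap hx.1.le)
  set G : ℕ → ℝ := fun j => ∫ x in a..(c ^ (j + m0)), f x / x with hG
  have key : ∀ k : ℕ, f (c ^ (k + m0 + 1)) * Real.log c ≤ G (k + 1) - G k := by
    intro k
    set p := c ^ (k + m0) with hp
    set q := c ^ (k + m0 + 1) with hq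
    have hap : a ≤ p := hpow _ (by omega)
    have hpq : p ≤ q := pow_le_pow_right₀ hc.le (by omega)
    have haq : a ≤ q := hap.trans hpq
    have hp0 : 0 < p := lt_of_lt_of_le ha hap
    have hGdiff : G (k+1) - G k = ∫ x in p..q, f x / x := by
      have := intervalIntegral.integral_add_adjacent_intervals
        (hII a p le_rfl hap) (hII p q hap hpq)
      have hq' : c ^ (k + 1 + m0) = q := by rw [hq]; ring
      rw [hG]; dsimp only; rw [hq']
      linarith [this]
    rw [hGdiff, intervalIntegral.integral_of_le hpq]
    have hconst : ∫ x in Set.Ioc p q, f q * x⁻¹ = f q * Real.log c := by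
      rw [← intervalIntegral.integral_of_le hpq, intervalIntegral.integral_const_mul,
        integral_inv (by
          rw [Set.uIcc_of_le hpq]
          exact fun h => absurd h.1 (not_le.2 hp0))]
      congr 1
      have hqp : q / p = c := by
        rw [hq, hp, pow_succ]
        field_simp
      rw [hqp]
    calc f q * Real.log c = ∫ x in Set.Ioc p q, f q * x⁻¹ := hconst.symm
      _ ≤ ∫ x in Set.Ioc p q, f x / x := by
          apply setIntegral_mono_on
          · exact ((continuousOn_const.mul (continuousOn_inv₀.mono (fun x hx =>
              ne_of_gt (lt_of_lt_of_le hp0 hx.1)))).integrableOn_Icc).mono_set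
              Set.Ioc_subset_Icc_self
          · exact hint.mono_set (fun x hx => le_trans hap hx.1.le)
          · exact measurableSet_Ioc
          · intro x hx
            have hx0 : 0 < x := lt_of_le_of_lt hp0.le hx.1
            rw [div_eq_mul_inv]
            exact mul_le_mul_of_nonneg_right
              (hanti (le_trans hap hx.1.le) haq hx.2) (inv_nonneg.2 hx0.le)
  have hM : ∀ j, G j ≤ ∫ x in Set.Ici a, f x / x := by
    intro j
    rw [hG]; dsimp only
    rw [intervalIntegral.integral_of_le (hpow (j + m0) (by omega))]
    apply setIntegral_mono_set hint
    · filter_upwards [ae_restrict_mem measurableSet_Ici] with x hx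
      exact div_nonneg (h0 x hx) (le_trans ha.le hx)
    · exact HasSubset.Subset.eventuallyLE (fun x hx => hx.1.le)
  have hG0 : 0 ≤ G 0 := by
    rw [hG]; dsimp only
    rw [intervalIntegral.integral_of_le (hpow (0 + m0) (by omega))]
    apply setIntegral_nonneg measurableSet_Ioc
    intro x hx
    exact div_nonneg (h0 x hx.1.le) (le_trans ha.le hx.1.le)
  have hterm0 : ∀ k : ℕ, 0 ≤ f (c ^ (k + m0 + 1)) := fun k =>
    h0 _ (hpow _ (by omega))
  apply summable_of_sum_range_le hterm0
    (c := (∫ x in Set.Ici a, f x / x) / Real.log c)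
  intro n
  rw [le_div_iff₀ hlc]
  calc (∑ i ∈ Finset.range n, f (c ^ (i + m0 + 1))) * Real.log c
      = ∑ i ∈ Finset.range n, f (c ^ (i + m0 + 1)) * Real.log c := Finset.sum_mul ..
    _ ≤ ∑ i ∈ Finset.range n, (G (i+1) - G i) := Finset.sum_le_sum (fun i _ => key i)
    _ = G n - G 0 := Finset.sum_range_sub G n
    _ ≤ ∫ x in Set.Ici a, f x / x := by linarith [hM n, hG0]


lemma summable_mono_aux {b d : ℝ} (hb : 0 < b) (hd0 : 0 < d) (hd1 : d < 1) {g : ℝ → ℝ}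
    (hmono : MonotoneOn g (Set.Icc 0 b)) (h0 : ∀ x ∈ Set.Icc 0 b, 0 ≤ g x)
    (hint : IntegrableOn (fun x => g x / x) (Set.Ioc 0 b))
    {n0 : ℕ} (hn0 : d ^ n0 ≤ b) :
    Summable (fun k : ℕ => g (d ^ (k + n0 + 1))) := by
  have hld : 0 < -Real.log d := by
    have := Real.log_neg hd0 hd1; linarith
  have hpow : ∀ j : ℕ, n0 ≤ j → d ^ j ≤ b := fun j hj =>
    le_trans (pow_le_pow_of_le_one hd0.le hd1.le hj) hn0
  have hdp : ∀ j : ℕ, (0:ℝ) < d ^ j := fun j => pow_pos hd0 j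
  have hII : ∀ p q : ℝ, 0 < p → p ≤ q → q ≤ b →
      IntervalIntegrable (fun x => g x / x) volume p q := by
    intro p q hp hpq hqb
    rw [intervalIntegrable_iff, Set.uIoc_of_le hpq]
    exact hint.mono_set (fun x hx => ⟨lt_of_lt_of_le hp hx.1.le, hx.2.trans hqb⟩)
  set G : ℕ → ℝ := fun j => ∫ x in (d ^ (j + n0))..b, g x / x with hG
  have key : ∀ k : ℕ, g (d ^ (k + n0 + 1)) * (-Real.log d) ≤ G (k + 1) - G k := by
    intro k
    set p := d ^ (k + n0 + 1) with hp
    set q := d ^ (k + n0) with hq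
    have hpq : p ≤ q := pow_le_pow_of_le_one hd0.le hd1.le (by omega)
    have hqb : q ≤ b := hpow _ (by omega)
    have hp0 : 0 < p := hdp _
    have hpmem : p ∈ Set.Icc (0:ℝ) b := ⟨hp0.le, le_trans hpq hqb⟩
    have hGdiff : G (k+1) - G k = ∫ x in p..q, g x / x := by
      have := intervalIntegral.integral_add_adjacent_intervals
        (hII p q hp0 hpq hqb) (hII q b (hdp _) hqb le_rfl)
      have hq' : d ^ (k + 1 + n0) = p := by rw [hp]; ring
      rw [hG]; dsimp only; rw [hq']
      linarith [this]
    rw [hGdiff, intervalIntegral.integral_of_le hpq]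
    have hconst : ∫ x in Set.Ioc p q, g p * x⁻¹ = g p * (-Real.log d) := by
      rw [← intervalIntegral.integral_of_le hpq, intervalIntegral.integral_const_mul,
        integral_inv (by
          rw [Set.uIcc_of_le hpq]
          exact fun h => absurd h.1 (not_le.2 hp0))]
      congr 1
      have hqp : q / p = d⁻¹ := by
        rw [hq, hp, pow_succ]
        field_simp
      rw [hqp, Real.log_inv]
    calc g p * (-Real.log d) = ∫ x in Set.Ioc p q, g p * x⁻¹ := hconst.symm
      _ ≤ ∫ x in Set.Ioc p q, g x / x := by
          apply setIntegral_mono_on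
          · exact ((continuousOn_const.mul (continuousOn_inv₀.mono (fun x hx =>
              ne_of_gt (lt_of_lt_of_le hp0 hx.1)))).integrableOn_Icc).mono_set
              Set.Ioc_subset_Icc_self
          · exact hint.mono_set (fun x hx => ⟨lt_of_lt_of_le hp0 hx.1.le, hx.2.trans hqb⟩)
          · exact measurableSet_Ioc
          · intro x hx
            have hx0 : 0 < x := lt_of_le_of_lt hp0.le hx.1
            rw [div_eq_mul_inv]
            exact mul_le_mul_of_nonneg_right
              (hmono hpmem ⟨hx0.le, hx.2.trans hqb⟩ hx.1.le) (inv_nonneg.2 hx0.le)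
  have hM : ∀ j, G j ≤ ∫ x in Set.Ioc 0 b, g x / x := by
    intro j
    rw [hG]; dsimp only
    rw [intervalIntegral.integral_of_le (hpow (j + n0) (by omega))]
    apply setIntegral_mono_set hint
    · filter_upwards [ae_restrict_mem measurableSet_Ioc] with x hx
      exact div_nonneg (h0 x ⟨hx.1.le, hx.2⟩) hx.1.le
    · exact HasSubset.Subset.eventuallyLE
        (fun x hx => ⟨lt_of_lt_of_le (hdp _) hx.1.le, hx.2⟩)
  have hG0 : 0 ≤ G 0 := by
    rw [hG]; dsimp only
    rw [intervalIntegral.integral_of_le (hpow (0 + n0) (by omega))]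
    apply setIntegral_nonneg measurableSet_Ioc
    intro x hx
    exact div_nonneg (h0 x ⟨(lt_of_lt_of_le (hdp _) hx.1.le).le, hx.2⟩)
      (lt_of_lt_of_le (hdp _) hx.1.le).le
  have hterm0 : ∀ k : ℕ, 0 ≤ g (d ^ (k + n0 + 1)) := fun k =>
    h0 _ ⟨(hdp _).le, hpow _ (by omega)⟩
  apply summable_of_sum_range_le hterm0
    (c := (∫ x in Set.Ioc 0 b, g x / x) / (-Real.log d))
  intro n
  rw [le_div_iff₀ hld]
  calc (∑ i ∈ Finset.range n, g (d ^ (i + n0 + 1))) * (-Real.log d)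
      = ∑ i ∈ Finset.range n, g (d ^ (i + n0 + 1)) * (-Real.log d) := Finset.sum_mul ..
    _ ≤ ∑ i ∈ Finset.range n, (G (i+1) - G i) := Finset.sum_le_sum (fun i _ => key i)
    _ = G n - G 0 := Finset.sum_range_sub G n
    _ ≤ ∫ x in Set.Ioc 0 b, g x / x := by linarith [hM n, hG0]


lemma bc_aux {Ω : Type*} [MeasurableSpace Ω] (μ : Measure Ω) [IsProbabilityMeasure μ]
    (s : ℕ → Set Ω) (u : ℕ → ℝ) (hu : Summable u) (hu0 : ∀ k, 0 ≤ u k)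
    (hle : ∀ k, μ (s k) ≤ ENNReal.ofReal (u k)) :
    ∀ᵐ ω ∂μ, ∀ᶠ k in atTop, ω ∉ s k := by
  apply ae_eventually_notMem
  have : ∑' k, μ (s k) ≤ ENNReal.ofReal (∑' k, u k) := by
    rw [ENNReal.ofReal_tsum_of_nonneg hu0 hu]
    exact ENNReal.tsum_le_tsum hle
  exact ne_top_of_le_ne_top ENNReal.ofReal_ne_top this

lemma root_tendsto_one {C : ℝ} (hC : 0 < C) :
    Tendsto (fun n : ℕ => C ^ (1 / (n : ℝ))) atTop (nhds 1) := by
  have h : (fun n : ℕ => C ^ (1 / (n : ℝ))) =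
      fun n : ℕ => Real.exp (Real.log C * (1 / (n : ℝ))) := by
    funext n
    rw [Real.rpow_def_of_pos hC]
  rw [h]
  have : Tendsto (fun n : ℕ => Real.log C * (1 / (n : ℝ))) atTop (nhds 0) := by
    simpa using tendsto_one_div_atTop_nhds_zero_nat.const_mul (Real.log C)
  simpa [Function.comp_def] using (Real.continuous_exp.tendsto 0).comp this

/-- Lemma 4.2, limit (4.6). For a sequence of complex random coefficients
`A_k` whose distribution functions `F_k(x) = μ {|A_k| ≤ x}` satisfy Assumption 1
(`1 - F_k(x) ≤ f(x)` on `[a,∞)` for all `k`, with `f : [a,∞) → [0,1]` decreasing and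
`∫_a^∞ f(x)/x dx < ∞`) and Assumption 2 (`F_k(x) ≤ g(x)` on `[0,b]` for all `k`, with
`g : [0,b] → [0,1]` increasing and `∫_0^b g(x)/x dx < ∞`), one has
`lim_{n→∞} max_{0≤k≤n} |A_k|^{1/n} = 1` almost surely. -/
theorem tendsto_max_abs_rpow_one
    {Ω : Type*} [MeasurableSpace Ω] (μ : Measure Ω) [IsProbabilityMeasure μ]
    (A : ℕ → Ω → ℂ) (hA : ∀ k, Measurable (A k))
    (a : ℝ) (ha : 1 < a) (f : ℝ → ℝ)
    (hf_anti : AntitoneOn f (Set.Ici a))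
    (hf_mem : ∀ x ∈ Set.Ici a, f x ∈ Set.Icc (0 : ℝ) 1)
    (hf_int : IntegrableOn (fun x => f x / x) (Set.Ici a))
    (htail : ∀ k, ∀ x ∈ Set.Ici a,
      1 - (μ {ω | ‖A k ω‖ ≤ x}).toReal ≤ f x)
    (b : ℝ) (hb0 : 0 < b) (hb1 : b < 1) (g : ℝ → ℝ)
    (hg_mono : MonotoneOn g (Set.Icc 0 b))
    (hg_mem : ∀ x ∈ Set.Icc 0 b, g x ∈ Set.Icc (0 : ℝ) 1)
    (hg_int : IntegrableOn (fun x => g x / x) (Set.Ioc 0 b))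
    (hsmall : ∀ k, ∀ x ∈ Set.Icc 0 b,
      (μ {ω | ‖A k ω‖ ≤ x}).toReal ≤ g x) :
    ∀ᵐ ω ∂μ,
      Tendsto
        (fun n : ℕ =>
          ((Finset.range (n + 1)).sup' Finset.nonempty_range_add_one
              fun k => ‖A k ω‖) ^ (1 / (n : ℝ)))
        atTop (nhds 1) := by
  have hmeas : ∀ k (x : ℝ), MeasurableSet {ω | ‖A k ω‖ ≤ x} := fun k x =>
    measurableSet_le (continuous_norm.measurable.comp (hA k)) measurable_const
  -- tail bound in ENNReal
  have htail' : ∀ k, ∀ x ∈ Set.Ici a,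
      μ {ω | x < ‖A k ω‖} ≤ ENNReal.ofReal (f x) := by
    intro k x hx
    have hco : {ω | x < ‖A k ω‖} = {ω | ‖A k ω‖ ≤ x}ᶜ := by
      ext ω; simp [not_le]
    rw [hco, prob_compl_eq_one_sub (hmeas k x), tsub_le_iff_left]
    have h1 : (1:ℝ) ≤ (μ {ω | ‖A k ω‖ ≤ x}).toReal + f x := by
      linarith [htail k x hx]
    calc (1 : ENNReal) = ENNReal.ofReal 1 := by simp
      _ ≤ ENNReal.ofReal ((μ {ω | ‖A k ω‖ ≤ x}).toReal + f x) :=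
          ENNReal.ofReal_le_ofReal h1
      _ = ENNReal.ofReal (μ {ω | ‖A k ω‖ ≤ x}).toReal
            + ENNReal.ofReal (f x) :=
          ENNReal.ofReal_add ENNReal.toReal_nonneg (hf_mem x hx).1
      _ = μ {ω | ‖A k ω‖ ≤ x} + ENNReal.ofReal (f x) := by
          rw [ENNReal.ofReal_toReal (measure_ne_top μ _)]
  -- upper a.e. statement per rational
  have hUq : ∀ q : ℚ, ∀ᵐ ω ∂μ, 1 < (q:ℝ) →
      ∀ᶠ j in atTop, ‖A j ω‖ ≤ (q:ℝ) ^ j := by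
    intro q
    by_cases hq : 1 < (q:ℝ)
    · set c : ℝ := (q:ℝ)
      obtain ⟨m0, hm0⟩ : ∃ m0 : ℕ, a ≤ c ^ m0 := by
        obtain ⟨m0, hm0⟩ := pow_unbounded_of_one_lt a hq
        exact ⟨m0, hm0.le⟩
      have hsum := summable_anti_aux (lt_trans one_pos ha) hq hf_anti
        (fun x hx => (hf_mem x hx).1) hf_int hm0
      have hax : ∀ k : ℕ, a ≤ c ^ (k + m0 + 1) := fun k =>
        hm0.trans (pow_le_pow_right₀ hq.le (by omega))
      have hbc := bc_aux μ
        (fun k => {ω | c ^ (k + m0 + 1) < ‖A (k + m0 + 1) ω‖})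
        (fun k => f (c ^ (k + m0 + 1))) hsum
        (fun k => (hf_mem _ (hax k)).1)
        (fun k => htail' (k + m0 + 1) _ (hax k))
      filter_upwards [hbc] with ω hω _
      obtain ⟨K, hK⟩ := eventually_atTop.1 hω
      rw [eventually_atTop]
      refine ⟨K + m0 + 1, fun j hj => ?_⟩
      have := hK (j - m0 - 1) (by omega)
      rw [not_lt] at this
      have hj' : j - m0 - 1 + m0 + 1 = j := by omega
      rwa [hj'] at this
    · filter_upwards with ω h
      exact absurd h hq
  -- lower a.e. statement per rational
  have hLq : ∀ q : ℚ, ∀ᵐ ω ∂μ, 0 < (q:ℝ) → (q:ℝ) < 1 →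
      ∀ᶠ n in atTop, (q:ℝ) ^ n < ‖A 0 ω‖ := by
    intro q
    by_cases hq : 0 < (q:ℝ) ∧ (q:ℝ) < 1
    · obtain ⟨hq0, hq1⟩ := hq
      set d : ℝ := (q:ℝ)
      obtain ⟨n0, hn0⟩ : ∃ n0 : ℕ, d ^ n0 ≤ b := by
        obtain ⟨n0, hn0⟩ := exists_pow_lt_of_lt_one hb0 hq1
        exact ⟨n0, hn0.le⟩
      have hsum := summable_mono_aux hb0 hq0 hq1 hg_mono
        (fun x hx => (hg_mem x hx).1) hg_int hn0
      have hbx : ∀ k : ℕ, d ^ (k + n0 + 1) ∈ Set.Icc (0:ℝ) b := fun k =>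
        ⟨(pow_pos hq0 _).le,
          le_trans (pow_le_pow_of_le_one hq0.le hq1.le (by omega)) hn0⟩
      have hbc := bc_aux μ
        (fun k => {ω | ‖A 0 ω‖ ≤ d ^ (k + n0 + 1)})
        (fun k => g (d ^ (k + n0 + 1))) hsum
        (fun k => (hg_mem _ (hbx k)).1)
        (fun k => by
          have h1 := hsmall 0 _ (hbx k)
          calc μ {ω | ‖A 0 ω‖ ≤ d ^ (k + n0 + 1)}
              = ENNReal.ofReal (μ {ω | ‖A 0 ω‖ ≤ d ^ (k + n0 + 1)}).toReal :=
                (ENNReal.ofReal_toReal (measure_ne_top μ _)).symm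
            _ ≤ ENNReal.ofReal (g (d ^ (k + n0 + 1))) := ENNReal.ofReal_le_ofReal h1)
      filter_upwards [hbc] with ω hω _ _
      obtain ⟨K, hK⟩ := eventually_atTop.1 hω
      rw [eventually_atTop]
      refine ⟨K + n0 + 1, fun n hn => ?_⟩
      have := hK (n - n0 - 1) (by omega)
      rw [not_le] at this
      have hn' : n - n0 - 1 + n0 + 1 = n := by omega
      rwa [hn'] at this
    · filter_upwards with ω h1 h2
      exact absurd ⟨h1, h2⟩ hq
  -- combine
  filter_upwards [(ae_all_iff).2 hUq, (ae_all_iff).2 hLq] with ω hU hL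
  set M : ℕ → ℝ := fun n => (Finset.range (n + 1)).sup' Finset.nonempty_range_add_one
    (fun k => ‖A k ω‖) with hM
  have hMA : ∀ n k, k < n + 1 → ‖A k ω‖ ≤ M n := by
    intro n k hk
    rw [hM]
    exact Finset.le_sup' (fun k => ‖A k ω‖) (Finset.mem_range.2 hk)
  have hM0 : ∀ n, 0 ≤ M n := fun n =>
    le_trans (norm_nonneg (A 0 ω)) (hMA n 0 (Nat.succ_pos n))
  rw [tendsto_order]
  constructor
  · -- lower bound
    intro y hy
    rcases lt_or_ge y 0 with hy0 | hy0
    · filter_upwards with n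
      exact lt_of_lt_of_le hy0 (Real.rpow_nonneg (hM0 n) _)
    · obtain ⟨q, hq1, hq2⟩ := exists_rat_btwn (show max y 0 < 1 from max_lt hy one_pos)
      have hq0 : (0:ℝ) < q := lt_of_le_of_lt (le_max_right y 0) hq1
      have hyq : y < (q:ℝ) := lt_of_le_of_lt (le_max_left y 0) hq1
      filter_upwards [hL q hq0 hq2, eventually_ge_atTop 1] with n h1 h2
      have hn0 : (n:ℝ) ≠ 0 := by positivity
      have hqn : ((q:ℝ) ^ n) ^ (1 / (n:ℝ)) = (q:ℝ) := by
        rw [← Real.rpow_natCast (q:ℝ) n, ← Real.rpow_mul hq0.le,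
          mul_one_div_cancel hn0, Real.rpow_one]
      have hlt : (q:ℝ) ^ n < M n := lt_of_lt_of_le h1 (hMA n 0 (Nat.succ_pos n))
      calc y < (q:ℝ) := hyq
        _ = ((q:ℝ) ^ n) ^ (1 / (n:ℝ)) := hqn.symm
        _ < M n ^ (1 / (n:ℝ)) :=
            Real.rpow_lt_rpow (pow_pos hq0 n).le hlt (by positivity)
  · -- upper bound
    intro y hy
    obtain ⟨q, hq1, hq2⟩ := exists_rat_btwn hy
    have hq0 : (0:ℝ) < q := lt_trans one_pos hq1
    obtain ⟨N, hN⟩ := eventually_atTop.1 (hU q hq1)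
    set C : ℝ := ((Finset.range (N + 1)).sup' Finset.nonempty_range_add_one
      (fun j => ‖A j ω‖)) ⊔ 1 with hC
    have hC1 : (1:ℝ) ≤ C := le_max_right _ _
    have hCN : ∀ k, k ≤ N → ‖A k ω‖ ≤ C := by
      intro k hk
      rw [hC]
      exact le_trans (Finset.le_sup' (fun j => ‖A j ω‖)
        (Finset.mem_range.2 (by omega))) (le_max_left _ _)
    have hroot := root_tendsto_one (lt_of_lt_of_le one_pos hC1)
    filter_upwards [hroot.eventually_lt_const hy, eventually_ge_atTop 1] with n h1 h2
    have hn0 : (n:ℝ) ≠ 0 := by positivity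
    have hinv : (0:ℝ) ≤ 1 / (n:ℝ) := by positivity
    have hMle : M n ≤ C ⊔ (q:ℝ) ^ n := by
      rw [hM]
      apply Finset.sup'_le
      intro k hk
      rcases le_or_gt k N with hkN | hkN
      · exact le_trans (hCN k hkN) le_sup_left
      · refine le_trans (hN k hkN.le) (le_trans ?_ le_sup_right)
        exact pow_le_pow_right₀ hq1.le (Nat.lt_succ_iff.1 (Finset.mem_range.1 hk))
    rcases le_total C ((q:ℝ) ^ n) with hcase | hcase
    · have hle : M n ≤ (q:ℝ) ^ n := le_trans hMle (sup_le hcase le_rfl)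
      have hqn : ((q:ℝ) ^ n) ^ (1 / (n:ℝ)) = (q:ℝ) := by
        rw [← Real.rpow_natCast (q:ℝ) n, ← Real.rpow_mul hq0.le,
          mul_one_div_cancel hn0, Real.rpow_one]
      calc M n ^ (1 / (n:ℝ)) ≤ ((q:ℝ) ^ n) ^ (1 / (n:ℝ)) :=
            Real.rpow_le_rpow (hM0 n) hle hinv
        _ = (q:ℝ) := hqn
        _ < y := hq2
    · have hle : M n ≤ C := le_trans hMle (sup_le le_rfl hcase)
      calc M n ^ (1 / (n:ℝ)) ≤ C ^ (1 / (n:ℝ)) :=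
            Real.rpow_le_rpow (hM0 n) hle hinv
        _ < y := h1
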